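/- For fixed y ∈ ℝⁿ and s > 0, each term in the expansion of the backward Gaussian kernel, namely (x,t) ↦ (t/s)^{k/2} e^{|x|²/(8t)} Φ_k(x/(2√t), y/(2√s)), extends to a polynomial in (x,t) that is parabolically homogeneous of degree k and backward caloric. -/

import Mathlib

open Real Finset

/-- The one-dimensional Hermite functions
`h k x = (2^k k! sqrt π)^{-1/2} (-1)^k e^{x²/2} (d/dx)^k e^{-x²}`. -/
noncomputable def hermiteFn (k : ℕ) (x : ℝ) : ℝ :=
  (Real.sqrt (2 ^ k * (Nat.factorial k : ℝ) * Real.sqrt Real.pi))⁻¹ * (-1 : ℝ) ^ k *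
    Real.exp (x ^ 2 / 2) * iteratedDeriv k (fun y : ℝ => Real.exp (-y ^ 2)) x

/-- The n-dimensional Hermite functions `φ_α x = ∏ j, h_{α j} (x j)`. -/
noncomputable def hermiteFnN (n : ℕ) (α : Fin n → ℕ) (x : EuclideanSpace ℝ (Fin n)) : ℝ :=
  ∏ j, hermiteFn (α j) (x j)

/-- The kernel `Φ_k(x,y) = ∑_{|α| = k} φ_α(x) φ_α(y)` of the projection onto Hermite
functions of degree `k`. -/
noncomputable def PhiK (n k : ℕ) (x y : EuclideanSpace ℝ (Fin n)) : ℝ :=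
  ∑ α ∈ Finset.Nat.antidiagonalTuple n k, hermiteFnN n α x * hermiteFnN n α y

/-- The Laplacian of `f : ℝⁿ → ℝ`, as the sum of the second derivatives along the
coordinate directions. -/
noncomputable def lap (n : ℕ) (f : EuclideanSpace ℝ (Fin n) → ℝ)
    (x : EuclideanSpace ℝ (Fin n)) : ℝ :=
  ∑ j : Fin n, iteratedDeriv 2 (fun t : ℝ => f (x + t • EuclideanSpace.single j (1 : ℝ))) 0

/-- The backward caloric functions `Q_α(x,t) = t^{|α|/2} φ_α(x/(2√t)) e^{|x|²/(8t)}`. -/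
noncomputable def Qfun (n : ℕ) (α : Fin n → ℕ) (x : EuclideanSpace ℝ (Fin n)) (t : ℝ) : ℝ :=
  Real.sqrt t ^ (∑ j, α j) * hermiteFnN n α ((2 * Real.sqrt t)⁻¹ • x) *
    Real.exp (‖x‖ ^ 2 / (8 * t))



open Polynomial

noncomputable section

def hp : ℕ → Polynomial (Polynomial ℝ)
  | 0 => 1
  | (m+1) => X * hp m - C (2 * X) * derivative (hp m)

def Dt (p : Polynomial (Polynomial ℝ)) : Polynomial (Polynomial ℝ) :=
  ∑ i ∈ p.support, C (derivative (p.coeff i)) * X ^ i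

lemma Dt_coeff (p : Polynomial (Polynomial ℝ)) (i : ℕ) :
    (Dt p).coeff i = derivative (p.coeff i) := by
  rw [Dt, finset_sum_coeff]
  by_cases h : i ∈ p.support
  · rw [Finset.sum_eq_single i]
    · simp [C_mul_X_pow_eq_monomial, coeff_monomial]
    · intro b _ hb; simp [C_mul_X_pow_eq_monomial, coeff_monomial, hb]
    · intro h'; exact absurd h h'
  · have : p.coeff i = 0 := Polynomial.notMem_support_iff.mp h
    rw [this, map_zero]
    refine Finset.sum_eq_zero fun b hb => ?_
    have hbi : b ≠ i := fun e => h (e ▸ hb)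
    simp [C_mul_X_pow_eq_monomial, coeff_monomial, hbi]

lemma Dt_X_mul (p : Polynomial (Polynomial ℝ)) : Dt (X * p) = X * Dt p := by
  ext i
  cases i with
  | zero => simp [Dt_coeff, mul_coeff_zero]
  | succ i => simp [Dt_coeff, coeff_X_mul]

lemma Dt_C_mul (a : Polynomial ℝ) (p : Polynomial (Polynomial ℝ)) :
    Dt (C a * p) = C (derivative a) * p + C a * Dt p := by
  ext i
  simp [Dt_coeff, coeff_C_mul, derivative_mul, coeff_add]

lemma Dt_sub (p q : Polynomial (Polynomial ℝ)) : Dt (p - q) = Dt p - Dt q := by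
  ext i; simp [Dt_coeff, coeff_sub, derivative_sub]

lemma Dt_derivative (p : Polynomial (Polynomial ℝ)) :
    Dt (derivative p) = derivative (Dt p) := by
  ext i
  simp [Dt_coeff, coeff_derivative, derivative_mul]

lemma Dt_one : Dt (1 : Polynomial (Polynomial ℝ)) = 0 := by
  ext i
  rcases eq_or_ne i 0 with h | h <;> simp [Dt_coeff, h, coeff_one]

/-- The backward-heat equation for `hp`: `∂ₜ hp m = - ∂ₓ² hp m`. -/
lemma Dt_hp (m : ℕ) : Dt (hp m) = - derivative (derivative (hp m)) := by
  induction m with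
  | zero => simp [hp, Dt_one]
  | succ m ih =>
      rw [hp, Dt_sub, Dt_X_mul, Dt_C_mul, Dt_derivative, ih]
      have h2 : derivative (2 * X : Polynomial ℝ) = 2 := by simp
      rw [h2]
      simp only [derivative_sub, derivative_add, derivative_mul, derivative_X, derivative_C, derivative_neg, derivative_C_mul, derivative_one, derivative_zero, map_ofNat]
      ring

end

/-- Evaluation of a bivariate polynomial at `(x, t)`. -/
noncomputable def pev (p : Polynomial (Polynomial ℝ)) (x t : ℝ) : ℝ :=
  Polynomial.eval₂ (Polynomial.evalRingHom t) x p

lemma pev_eq_eval_map (p : Polynomial (Polynomial ℝ)) (x t : ℝ) :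
    pev p x t = Polynomial.eval x (p.map (Polynomial.evalRingHom t)) :=
  (Polynomial.eval_map _ _).symm

lemma pev_eq_eval_eval (p : Polynomial (Polynomial ℝ)) (x t : ℝ) :
    pev p x t = Polynomial.eval t (p.eval (C x)) := by
  induction p using Polynomial.induction_on' with
  | add p q hp hq => simp only [pev] at *; rw [eval₂_add, hp, hq, eval_add, eval_add]
  | monomial i a => simp [pev, eval₂_monomial, eval_monomial]

lemma hp_grade : ∀ m i j : ℕ, (((hp m).coeff i).coeff j) ≠ 0 → i + 2*j = m := by
  intro m
  induction m with
  | zero =>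
      intro i j h
      rcases eq_or_ne i 0 with hi | hi
      · rcases eq_or_ne j 0 with hj | hj
        · simp [hi, hj]
        · exfalso; apply h; simp [hp, hi, coeff_one, hj]
      · exfalso; apply h; simp [hp, coeff_one, hi]
  | succ m ih =>
      intro i j h
      rw [hp, coeff_sub] at h
      have h' : (((X * hp m).coeff i).coeff j ≠ 0) ∨
          (((C (2*X) * derivative (hp m)).coeff i).coeff j ≠ 0) := by
        by_contra hc
        push_neg at hc
        rw [coeff_sub, hc.1, hc.2, sub_zero] at h
        exact h rfl
      rcases h' with hA | hB
      · cases i with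
        | zero => exfalso; apply hA; simp [mul_coeff_zero]
        | succ i =>
            rw [coeff_X_mul] at hA
            have := ih i j hA
            omega
      · rw [coeff_C_mul, coeff_derivative] at hB
        have hcast : ((i : Polynomial ℝ) + 1) = C ((i : ℝ) + 1) := by
          simp
        rw [hcast] at hB
        have heq : (2*X : Polynomial ℝ) * ((hp m).coeff (i+1) * C ((i:ℝ)+1)) =
            C 2 * (X * ((hp m).coeff (i+1) * C ((i:ℝ)+1))) := by
          rw [map_ofNat]; ring
        rw [heq, coeff_C_mul] at hB
        cases j with
        | zero =>
            exfalso; apply hB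
            rw [mul_coeff_zero, coeff_X_zero, zero_mul, mul_zero]
        | succ j =>
            rw [coeff_X_mul, coeff_mul_C] at hB
            have hc : ((hp m).coeff (i+1)).coeff j ≠ 0 := by
              intro h0; rw [h0, zero_mul, mul_zero] at hB; exact hB rfl
            have := ih (i+1) j hc
            omega


lemma pev_eq_sum (p : Polynomial (Polynomial ℝ)) (x t : ℝ) :
    pev p x t = ∑ i ∈ p.support, ∑ j ∈ (p.coeff i).support,
      ((p.coeff i).coeff j) * t ^ j * x ^ i := by
  rw [pev, eval₂_eq_sum, Polynomial.sum]
  refine Finset.sum_congr rfl fun i _ => ?_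
  rw [coe_evalRingHom, eval_eq_sum, Polynomial.sum, Finset.sum_mul]
  try exact Finset.sum_congr rfl fun j _ => by ring

lemma pev_hp_homog (m : ℕ) (l x t : ℝ) :
    pev (hp m) (l * x) (l ^ 2 * t) = l ^ m * pev (hp m) x t := by
  rw [pev_eq_sum, pev_eq_sum, Finset.mul_sum]
  refine Finset.sum_congr rfl fun i _ => ?_
  rw [Finset.mul_sum]
  refine Finset.sum_congr rfl fun j hj => ?_
  have hc : ((hp m).coeff i).coeff j ≠ 0 := Polynomial.mem_support_iff.mp hj
  have hij : i + 2 * j = m := hp_grade m i j hc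
  have : (l ^ 2 * t) ^ j * (l * x) ^ i = l ^ (i + 2*j) * (t ^ j * x ^ i) := by
    rw [mul_pow, mul_pow, ← pow_mul, pow_add]; ring
  rw [hij] at this
  calc ((hp m).coeff i).coeff j * (l ^ 2 * t) ^ j * (l * x) ^ i
      = ((hp m).coeff i).coeff j * ((l ^ 2 * t) ^ j * (l * x) ^ i) := by ring
    _ = ((hp m).coeff i).coeff j * (l ^ m * (t ^ j * x ^ i)) := by rw [this]
    _ = l ^ m * (((hp m).coeff i).coeff j * t ^ j * x ^ i) := by ring

noncomputable def gg (m : ℕ) : ℝ → ℝ := iteratedDeriv m (fun y : ℝ => Real.exp (-y ^ 2))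

lemma contDiff_gaussian : ContDiff ℝ ⊤ (fun y : ℝ => Real.exp (-y ^ 2)) :=
  Real.contDiff_exp.comp ((contDiff_id.pow 2).neg)

lemma differentiable_gg (m : ℕ) : Differentiable ℝ (gg m) :=
  contDiff_gaussian.differentiable_iteratedDeriv m (by simp)

lemma gg_succ (m : ℕ) : gg (m + 1) = deriv (gg m) := iteratedDeriv_succ

lemma pev_deriv (p : Polynomial (Polynomial ℝ)) (x t : ℝ) :
    deriv (fun w => pev p w t) x = pev (derivative p) x t := by
  have : (fun w => pev p w t) = fun w => Polynomial.eval w (p.map (evalRingHom t)) := by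
    funext w; exact pev_eq_eval_map p w t
  rw [this, Polynomial.deriv, derivative_map, ← pev_eq_eval_map]

lemma pev_hp_eq (m : ℕ) (t : ℝ) (ht : 0 < t) (x : ℝ) :
    pev (hp m) x t = (-1 : ℝ) ^ m * Real.sqrt t ^ m * Real.exp (x ^ 2 / (4 * t)) *
      gg m (x / (2 * Real.sqrt t)) := by
  have hst : Real.sqrt t * Real.sqrt t = t := Real.mul_self_sqrt ht.le
  have hsn : Real.sqrt t ≠ 0 := ne_of_gt (Real.sqrt_pos.mpr ht)
  induction m generalizing x with
  | zero =>
      have hsq : (x / (2 * Real.sqrt t)) ^ 2 = x ^ 2 / (4 * t) := by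
        rw [div_pow]; congr 1; rw [mul_pow]; rw [sq, sq, hst]; ring
      simp only [hp, pev, eval₂_one, pow_zero, one_mul, gg, iteratedDeriv_zero]
      rw [hsq, ← Real.exp_add]
      rw [add_neg_cancel, Real.exp_zero]
  | succ m ih =>
      have hL : pev (hp (m+1)) x t =
          x * pev (hp m) x t - (2 * t) * pev (derivative (hp m)) x t := by
        rw [hp, pev, eval₂_sub, eval₂_mul, eval₂_mul, eval₂_X, eval₂_C]
        simp [pev]
      have hfun : (fun w => pev (hp m) w t) = fun w =>
          ((-1:ℝ)^m * Real.sqrt t ^ m) *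
            (Real.exp (w^2/(4*t)) * gg m (w/(2*Real.sqrt t))) := by
        funext w; rw [ih w]; ring
      have h1 : HasDerivAt (fun w : ℝ => w^2/(4*t)) (2*x/(4*t)) x := by
        have := (hasDerivAt_pow 2 x).div_const (4*t)
        simpa using this
      have h2 : HasDerivAt (fun w : ℝ => Real.exp (w^2/(4*t)))
          (Real.exp (x^2/(4*t)) * (2*x/(4*t))) x := h1.exp
      have h3 : HasDerivAt (fun w : ℝ => w/(2*Real.sqrt t)) (1/(2*Real.sqrt t)) x :=
        (hasDerivAt_id x).div_const _
      have h4 : HasDerivAt (gg m) (gg (m+1) (x / (2*Real.sqrt t))) (x / (2*Real.sqrt t)) := by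
        have hd := (differentiable_gg m (x / (2*Real.sqrt t))).hasDerivAt
        rwa [← gg_succ] at hd
      have h5 : HasDerivAt (fun w => gg m (w/(2*Real.sqrt t)))
          (gg (m+1) (x / (2*Real.sqrt t)) * (1/(2*Real.sqrt t))) x := h4.comp x h3
      have h6 := (h2.mul h5).const_mul ((-1:ℝ)^m * Real.sqrt t ^ m)
      have hderiv : deriv (fun w => pev (hp m) w t) x =
          ((-1:ℝ)^m * Real.sqrt t ^ m) *
            ((Real.exp (x^2/(4*t)) * (2*x/(4*t))) * gg m (x / (2*Real.sqrt t)) +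
              Real.exp (x^2/(4*t)) * (gg (m+1) (x / (2*Real.sqrt t)) * (1/(2*Real.sqrt t)))) := by
        rw [hfun]; exact h6.deriv
      rw [hL, ih x, ← pev_deriv, hderiv]
      set e := Real.exp (x^2/(4*t)) with he
      set A := gg m (x / (2*Real.sqrt t)) with hA
      set B := gg (m+1) (x / (2*Real.sqrt t)) with hB
      field_simp
      linear_combination (4*Real.sqrt t^m*e*B*(-1:ℝ)^m) * hst

lemma Dt_add (p q : Polynomial (Polynomial ℝ)) : Dt (p + q) = Dt p + Dt q := by
  ext i; simp [Dt_coeff, coeff_add]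

lemma derivative_eval_C (p : Polynomial (Polynomial ℝ)) (x : ℝ) :
    derivative (p.eval (C x)) = (Dt p).eval (C x) := by
  induction p using Polynomial.induction_on' with
  | add p q hp hq => rw [eval_add, derivative_add, hp, hq, Dt_add, eval_add]
  | monomial i a =>
      have hDt : Dt (monomial i a) = monomial i (derivative a) := by
        ext j
        simp only [Dt_coeff, coeff_monomial]
        split_ifs <;> simp
      rw [hDt, eval_monomial, eval_monomial]
      rw [← map_pow, derivative_mul, derivative_C, mul_zero, add_zero]

lemma derivative_finset_prod' {ι : Type*} [DecidableEq ι] (s : Finset ι) (f : ι → Polynomial ℝ) :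
    derivative (∏ i ∈ s, f i) = ∑ i ∈ s, (∏ j ∈ s.erase i, f j) * derivative (f i) := by
  induction s using Finset.induction_on with
  | empty => simp
  | @insert a s ha ih =>
      rw [Finset.prod_insert ha, derivative_mul, ih, Finset.sum_insert ha,
        Finset.erase_insert ha, Finset.mul_sum]
      congr 1
      · ring
      · refine Finset.sum_congr rfl fun i hi => ?_
        have hia : a ≠ i := fun h => ha (h ▸ hi)
        rw [Finset.erase_insert_of_ne hia,
          Finset.prod_insert (fun h => ha (Finset.mem_of_mem_erase h))]
        ring

lemma iteratedDeriv_two_poly (a : ℝ) (q : Polynomial ℝ) :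
    iteratedDeriv 2 (fun r => Polynomial.eval (a + r) q) 0 =
      Polynomial.eval a (derivative (derivative q)) := by
  have hd : ∀ (q : Polynomial ℝ), deriv (fun r => Polynomial.eval (a + r) q) =
      fun r => Polynomial.eval (a + r) (derivative q) := by
    intro q; funext r
    have h1 : HasDerivAt (fun r : ℝ => a + r) 1 r := (hasDerivAt_id r).const_add a
    have h2 := (q.hasDerivAt (a + r)).comp r h1
    simpa [Function.comp_def] using h2.deriv
  rw [show (2:ℕ) = 1 + 1 from rfl, iteratedDeriv_succ, iteratedDeriv_one, hd, hd]
  simp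

noncomputable def inj (n : ℕ) (j : Fin n) (p : Polynomial (Polynomial ℝ)) :
    MvPolynomial (Fin (n+1)) ℝ :=
  Polynomial.eval₂ (Polynomial.eval₂RingHom MvPolynomial.C (MvPolynomial.X (Fin.last n)))
    (MvPolynomial.X (Fin.castSucc j)) p

lemma eval_inj (n : ℕ) (j : Fin n) (p : Polynomial (Polynomial ℝ)) (v : Fin n → ℝ) (t : ℝ) :
    MvPolynomial.eval (Fin.snoc v t) (inj n j p) = pev p (v j) t := by
  rw [inj, Polynomial.hom_eval₂]
  have hcomp : (MvPolynomial.eval (Fin.snoc v t : Fin (n+1) → ℝ)).comp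
      (Polynomial.eval₂RingHom MvPolynomial.C (MvPolynomial.X (Fin.last n))) =
      Polynomial.evalRingHom t := by
    refine RingHom.ext fun a => ?_
    rw [RingHom.comp_apply, coe_eval₂RingHom, Polynomial.hom_eval₂]
    have h1 : (MvPolynomial.eval (Fin.snoc v t : Fin (n+1) → ℝ)).comp
        (MvPolynomial.C : ℝ →+* MvPolynomial (Fin (n+1)) ℝ) = RingHom.id ℝ :=
      RingHom.ext fun r => MvPolynomial.eval_C r
    rw [h1]
    have h2 : MvPolynomial.eval (Fin.snoc v t : Fin (n+1) → ℝ)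
        (MvPolynomial.X (Fin.last n)) = t := by
      rw [MvPolynomial.eval_X, Fin.snoc_last]
    rw [h2, coe_evalRingHom]
    rfl
  rw [hcomp]
  have h3 : MvPolynomial.eval (Fin.snoc v t : Fin (n+1) → ℝ)
      (MvPolynomial.X (Fin.castSucc j)) = v j := by
    rw [MvPolynomial.eval_X, Fin.snoc_castSucc]
  rw [h3]; rfl

noncomputable def cHerm (m : ℕ) : ℝ :=
  (Real.sqrt (2 ^ m * (Nat.factorial m : ℝ) * Real.sqrt Real.pi))⁻¹

lemma hermite_pev (m : ℕ) (t : ℝ) (ht : 0 < t) (w : ℝ) :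
    Real.sqrt t ^ m * Real.exp (w ^ 2 / (8 * t)) * hermiteFn m ((2 * Real.sqrt t)⁻¹ * w) =
      cHerm m * pev (hp m) w t := by
  have hst : Real.sqrt t * Real.sqrt t = t := Real.mul_self_sqrt ht.le
  have hu : (2 * Real.sqrt t)⁻¹ * w = w / (2 * Real.sqrt t) := by
    rw [inv_mul_eq_div]
  have hsq : ((2 * Real.sqrt t)⁻¹ * w) ^ 2 / 2 = w ^ 2 / (8 * t) := by
    rw [hu, div_pow, mul_pow, sq (Real.sqrt t), hst]
    ring
  rw [hermiteFn, hsq, pev_hp_eq m t ht w, ← hu]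
  have hee : Real.exp (w ^ 2 / (4 * t)) =
      Real.exp (w ^ 2 / (8 * t)) * Real.exp (w ^ 2 / (8 * t)) := by
    rw [← Real.exp_add]; congr 1; ring
  rw [hee, cHerm]
  simp only [gg]
  ring

noncomputable def Dcoef (n : ℕ) (y : EuclideanSpace ℝ (Fin n)) (s : ℝ) (α : Fin n → ℕ) : ℝ :=
  ∏ j, (cHerm (α j) * ((Real.sqrt s)⁻¹) ^ (α j) *
    hermiteFn (α j) (((2 * Real.sqrt s)⁻¹ • y) j))

noncomputable def Pbig (n k : ℕ) (y : EuclideanSpace ℝ (Fin n)) (s : ℝ) :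
    MvPolynomial (Fin (n+1)) ℝ :=
  ∑ α ∈ Finset.Nat.antidiagonalTuple n k,
    MvPolynomial.C (Dcoef n y s α) * ∏ j, inj n j (hp (α j))

lemma eval_Pbig (n k : ℕ) (y : EuclideanSpace ℝ (Fin n)) (s : ℝ) (v : Fin n → ℝ) (t : ℝ) :
    MvPolynomial.eval (Fin.snoc v t) (Pbig n k y s) =
      ∑ α ∈ Finset.Nat.antidiagonalTuple n k,
        Dcoef n y s α * ∏ j, pev (hp (α j)) (v j) t := by
  rw [Pbig, map_sum]
  refine Finset.sum_congr rfl fun α _ => ?_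
  rw [map_mul, MvPolynomial.eval_C, map_prod]
  congr 1
  exact Finset.prod_congr rfl fun j _ => eval_inj n j _ v t

theorem gaussian_series_terms_polynomial (n k : ℕ) (y : EuclideanSpace ℝ (Fin n)) (s : ℝ)
    (hs : 0 < s) :
    ∃ P : MvPolynomial (Fin (n + 1)) ℝ,
      (∀ (x : EuclideanSpace ℝ (Fin n)) (t : ℝ), 0 < t →
        MvPolynomial.eval (Fin.snoc (fun j => x j) t) P =
          (t / s) ^ ((k : ℝ) / 2) * Real.exp (‖x‖ ^ 2 / (8 * t)) *
            PhiK n k ((2 * Real.sqrt t)⁻¹ • x) ((2 * Real.sqrt s)⁻¹ • y)) ∧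
      (∀ l : ℝ, 0 ≤ l → ∀ (x : EuclideanSpace ℝ (Fin n)) (t : ℝ),
        MvPolynomial.eval (Fin.snoc (fun j => (l • x) j) (l ^ 2 * t)) P =
          l ^ k * MvPolynomial.eval (Fin.snoc (fun j => x j) t) P) ∧
      (∀ (x : EuclideanSpace ℝ (Fin n)) (t : ℝ),
        lap n (fun z => MvPolynomial.eval (Fin.snoc (fun j => z j) t) P) x +
          deriv (fun τ => MvPolynomial.eval (Fin.snoc (fun j => x j) τ) P) t = 0) := by
  classical
  refine ⟨Pbig n k y s, ?_, ?_, ?_⟩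
  · -- evaluation formula
    intro x t ht
    rw [eval_Pbig, PhiK, Finset.mul_sum]
    refine Finset.sum_congr rfl fun α hα => ?_
    have hk : ∑ j, α j = k := Finset.Nat.mem_antidiagonalTuple.mp hα
    have hts : (t/s) ^ ((k:ℝ)/2) = (Real.sqrt t * (Real.sqrt s)⁻¹) ^ k := by
      have h1 : ((k:ℝ)/2) = (1/2:ℝ) * (k:ℕ) := by push_cast; ring
      rw [h1, Real.rpow_mul (by positivity : (0:ℝ) ≤ t/s), Real.rpow_natCast]
      congr 1
      rw [← Real.sqrt_eq_rpow, Real.sqrt_div ht.le, div_eq_mul_inv]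
    have hxn : ‖x‖^2 = ∑ j, (x j)^2 := by
      rw [EuclideanSpace.norm_eq, Real.sq_sqrt (by positivity)]
      simp [Real.norm_eq_abs, sq_abs]
    have hexp : Real.exp (‖x‖^2/(8*t)) = ∏ j, Real.exp ((x j)^2/(8*t)) := by
      rw [hxn, Finset.sum_div, Real.exp_sum]
    calc Dcoef n y s α * ∏ j, pev (hp (α j)) (x j) t
        = ∏ j, (cHerm (α j) * ((Real.sqrt s)⁻¹) ^ (α j) *
            hermiteFn (α j) (((2 * Real.sqrt s)⁻¹ • y) j) * pev (hp (α j)) (x j) t) := by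
          rw [Dcoef, ← Finset.prod_mul_distrib]
      _ = ∏ j, ((Real.sqrt t ^ (α j) * (Real.sqrt s)⁻¹ ^ (α j)) *
            Real.exp ((x j)^2/(8*t)) *
            (hermiteFn (α j) (((2 * Real.sqrt t)⁻¹ • x) j) *
              hermiteFn (α j) (((2 * Real.sqrt s)⁻¹ • y) j))) := by
          refine Finset.prod_congr rfl fun j _ => ?_
          have hx : ((2 * Real.sqrt t)⁻¹ • x) j = (2 * Real.sqrt t)⁻¹ * x j := rfl
          rw [hx]
          linear_combination (-((Real.sqrt s)⁻¹ ^ (α j)) *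
            hermiteFn (α j) (((2 * Real.sqrt s)⁻¹ • y) j)) * (hermite_pev (α j) t ht (x j))
      _ = (∏ j, (Real.sqrt t ^ (α j) * (Real.sqrt s)⁻¹ ^ (α j))) *
            (∏ j, Real.exp ((x j)^2/(8*t))) *
            (∏ j, (hermiteFn (α j) (((2 * Real.sqrt t)⁻¹ • x) j) *
              hermiteFn (α j) (((2 * Real.sqrt s)⁻¹ • y) j))) := by
          rw [Finset.prod_mul_distrib, Finset.prod_mul_distrib]
      _ = (t/s) ^ ((k:ℝ)/2) * Real.exp (‖x‖ ^ 2 / (8 * t)) *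
            (hermiteFnN n α ((2 * Real.sqrt t)⁻¹ • x) * hermiteFnN n α ((2 * Real.sqrt s)⁻¹ • y)) := by
          rw [hts, hexp, hermiteFnN, hermiteFnN]
          rw [Finset.prod_mul_distrib, Finset.prod_mul_distrib,
            Finset.prod_pow_eq_pow_sum, Finset.prod_pow_eq_pow_sum, hk, ← mul_pow]
  · -- parabolic homogeneity
    intro l _ x t
    rw [eval_Pbig, eval_Pbig, Finset.mul_sum]
    refine Finset.sum_congr rfl fun α hα => ?_
    have hk : ∑ j, α j = k := Finset.Nat.mem_antidiagonalTuple.mp hα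
    have h1 : ∀ j : Fin n, pev (hp (α j)) ((l • x) j) (l^2 * t) =
        l ^ (α j) * pev (hp (α j)) (x j) t := by
      intro j
      have hco : ((l • x) j) = l * x j := rfl
      rw [hco, pev_hp_homog]
    calc Dcoef n y s α * ∏ j, pev (hp (α j)) ((l • x) j) (l^2 * t)
        = Dcoef n y s α * ∏ j, (l ^ (α j) * pev (hp (α j)) (x j) t) := by
          rw [Finset.prod_congr rfl fun j _ => h1 j]
      _ = l ^ k * (Dcoef n y s α * ∏ j, pev (hp (α j)) (x j) t) := by
          rw [Finset.prod_mul_distrib, Finset.prod_pow_eq_pow_sum, hk]; ring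
  · -- backward caloric
    intro x t
    set AT := Finset.Nat.antidiagonalTuple n k with hAT
    -- time derivative
    have hg : (fun τ => MvPolynomial.eval (Fin.snoc (fun j => x j) τ) (Pbig n k y s)) =
        fun τ => Polynomial.eval τ (∑ α ∈ AT, Dcoef n y s α •
          ∏ j, ((hp (α j)).eval (Polynomial.C (x j)))) := by
      funext τ
      rw [eval_Pbig, eval_finset_sum]
      refine Finset.sum_congr rfl fun α _ => ?_
      rw [eval_smul, eval_prod, smul_eq_mul]
      congr 1
      exact Finset.prod_congr rfl fun j _ => pev_eq_eval_eval _ _ _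
    have hderiv : deriv (fun τ => MvPolynomial.eval (Fin.snoc (fun j => x j) τ)
        (Pbig n k y s)) t =
        ∑ α ∈ AT, ∑ i, Dcoef n y s α *
          ((∏ j ∈ Finset.univ.erase i, pev (hp (α j)) (x j) t) *
            (- pev (derivative (derivative (hp (α i)))) (x i) t)) := by
      rw [hg, Polynomial.deriv, derivative_sum]
      rw [eval_finset_sum]
      refine Finset.sum_congr rfl fun α _ => ?_
      rw [derivative_smul, derivative_finset_prod', eval_smul, eval_finset_sum, smul_eq_mul,
        Finset.mul_sum]
      refine Finset.sum_congr rfl fun i _ => ?_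
      rw [eval_mul, eval_prod]
      congr 1
      congr 1
      · exact Finset.prod_congr rfl fun j _ => (pev_eq_eval_eval _ _ _).symm -- keep
      · rw [derivative_eval_C, Dt_hp, eval_neg, eval_neg, ← pev_eq_eval_eval]
    -- laplacian
    have hlap : ∀ i : Fin n,
        iteratedDeriv 2 (fun r : ℝ => MvPolynomial.eval
          (Fin.snoc (fun j => (x + r • EuclideanSpace.single i (1:ℝ)) j) t) (Pbig n k y s)) 0 =
        ∑ α ∈ AT, Dcoef n y s α *
          ((∏ j ∈ Finset.univ.erase i, pev (hp (α j)) (x j) t) *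
            pev (derivative (derivative (hp (α i)))) (x i) t) := by
      intro i
      have hfi : (fun r : ℝ => MvPolynomial.eval
          (Fin.snoc (fun j => (x + r • EuclideanSpace.single i (1:ℝ)) j) t) (Pbig n k y s)) =
          fun r => Polynomial.eval (x i + r)
            (∑ α ∈ AT, (Dcoef n y s α * ∏ j ∈ Finset.univ.erase i, pev (hp (α j)) (x j) t) •
              ((hp (α i)).map (Polynomial.evalRingHom t))) := by
        funext r
        rw [eval_Pbig, eval_finset_sum]
        refine Finset.sum_congr rfl fun α _ => ?_
        rw [eval_smul, smul_eq_mul]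
        have hcoord : ∀ j : Fin n, (x + r • EuclideanSpace.single i (1:ℝ)) j =
            if j = i then x i + r else x j := by
          intro j
          have : (x + r • EuclideanSpace.single i (1:ℝ)) j =
              x j + r * (if j = i then (1:ℝ) else 0) := by
            simp [EuclideanSpace.single_apply]
          rw [this]
          split_ifs with h
          · rw [h]; ring
          · ring
        have hsplit : ∏ j, pev (hp (α j)) ((x + r • EuclideanSpace.single i (1:ℝ)) j) t =
            pev (hp (α i)) (x i + r) t * ∏ j ∈ Finset.univ.erase i, pev (hp (α j)) (x j) t := by
          rw [← Finset.mul_prod_erase Finset.univ _ (Finset.mem_univ i)]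
          congr 1
          · rw [hcoord i, if_pos rfl]
          · refine Finset.prod_congr rfl fun j hj => ?_
            rw [hcoord j, if_neg (Finset.ne_of_mem_erase hj)]
        rw [hsplit, ← pev_eq_eval_map]
        ring
      rw [hfi, iteratedDeriv_two_poly]
      rw [derivative_sum, derivative_sum, eval_finset_sum]
      refine Finset.sum_congr rfl fun α _ => ?_
      rw [derivative_smul, derivative_smul, eval_smul, smul_eq_mul]
      rw [derivative_map, derivative_map, ← pev_eq_eval_map]
      ring
    rw [lap]
    have hlap' : ∑ i : Fin n, iteratedDeriv 2 (fun r : ℝ => MvPolynomial.eval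
          (Fin.snoc (fun j => (x + r • EuclideanSpace.single i (1:ℝ)) j) t) (Pbig n k y s)) 0 =
        ∑ α ∈ AT, ∑ i, Dcoef n y s α *
          ((∏ j ∈ Finset.univ.erase i, pev (hp (α j)) (x j) t) *
            pev (derivative (derivative (hp (α i)))) (x i) t) := by
      rw [Finset.sum_congr rfl fun i _ => hlap i]
      exact Finset.sum_comm
    rw [hlap', hderiv, ← Finset.sum_add_distrib]
    refine Finset.sum_eq_zero fun α _ => ?_
    rw [← Finset.sum_add_distrib]
    refine Finset.sum_eq_zero fun i _ => ?_
    ring
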